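/- Let Ω = B₁(0) ⊂ ℝ³, a(x) = 1 − ‖x‖², and 0 < ρ < 1/(4π). Then there is no L¹ eigenfunction: there exist no λ ∈ ℝ and u ∈ L¹(Ω) with u > 0 almost everywhere and ∫_Ω u > 0 such that ρ∫_Ω u(y) dy + (a(x) + λ) u(x) = 0 for almost every x ∈ Ω. -/

import Mathlib

open MeasureTheory Set Metric

private theorem vol3' : (volume (ball (0 : EuclideanSpace ℝ (Fin 3)) 1)).toReal = 4 * Real.pi / 3 := by
  rw [EuclideanSpace.volume_ball]
  have h52 : Real.Gamma ((Fintype.card (Fin 3)) / 2 + 1) = 3 / 4 * Real.sqrt Real.pi := by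
    have : ((Fintype.card (Fin 3)):ℝ) / 2 + 1 = 3/2 + 1 := by norm_num
    rw [this, Real.Gamma_add_one (by norm_num)]
    have : (3:ℝ)/2 = 1/2 + 1 := by norm_num
    rw [this, Real.Gamma_add_one (by norm_num), Real.Gamma_one_half_eq]
    ring
  have hs : Real.sqrt Real.pi ^ (Fintype.card (Fin 3)) = Real.pi * Real.sqrt Real.pi := by
    simp [Fintype.card_fin, pow_succ, Real.sq_sqrt Real.pi_pos.le, sq]
  rw [h52, hs]
  have hsp : Real.sqrt Real.pi > 0 := Real.sqrt_pos.mpr Real.pi_pos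
  rw [ENNReal.ofReal_one, one_pow, one_mul, ENNReal.toReal_ofReal (by positivity)]
  field_simp

private theorem polarbound' (c : ℝ) (hc : 0 ≤ c) :
    (∫ x in ball (0 : EuclideanSpace ℝ (Fin 3)) 1, (‖x‖ ^ 2 + c)⁻¹) ≤ 4 * Real.pi := by
  set f : ℝ → ℝ := fun y => if y < 1 then (y ^ 2 + c)⁻¹ else 0 with hf
  have hind : ∀ x : EuclideanSpace ℝ (Fin 3),
      f ‖x‖ = (ball (0 : EuclideanSpace ℝ (Fin 3)) 1).indicator (fun x => (‖x‖ ^ 2 + c)⁻¹) x := by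
    intro x
    by_cases h : ‖x‖ < 1
    · rw [indicator_of_mem (mem_ball_zero_iff.mpr h)]; simp [hf, h]
    · rw [indicator_of_notMem (by simpa [mem_ball_zero_iff] using h)]; simp [hf, h]
  have key := MeasureTheory.integral_fun_norm_addHaar
    (volume : Measure (EuclideanSpace ℝ (Fin 3))) f
  simp only [hind] at key
  rw [integral_indicator measurableSet_ball] at key
  rw [key]
  have hdim : Module.finrank ℝ (EuclideanSpace ℝ (Fin 3)) = 3 := finrank_euclideanSpace_fin
  rw [hdim]
  have hJeq : (∫ y in Ioi (0:ℝ), y ^ (3 - 1) • f y) = ∫ y in Ioo (0:ℝ) 1, y ^ 2 * (y ^ 2 + c)⁻¹ := by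
    rw [setIntegral_eq_of_subset_of_forall_diff_eq_zero measurableSet_Ioi
      Ioo_subset_Ioi_self ?_]
    · refine setIntegral_congr_fun measurableSet_Ioo fun y hy => ?_
      simp [hf, hy.2, smul_eq_mul]
    · intro y hy
      have : ¬ y < 1 := by
        rcases hy with ⟨h1, h2⟩
        simp only [mem_Ioo, not_and, not_lt] at h2
        exact not_lt.mpr (h2 h1)
      simp [hf, this]
  rw [hJeq]
  have hJint : IntegrableOn (fun y => y ^ 2 * (y ^ 2 + c)⁻¹) (Ioo (0:ℝ) 1) := by
    apply Measure.integrableOn_of_bounded (M := 1) (by simp)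
    · exact ((measurable_id.pow_const 2).mul
        ((measurable_id.pow_const 2).add_const c).inv).aestronglyMeasurable
    · filter_upwards [ae_restrict_mem measurableSet_Ioo] with y hy
      have hy2 : 0 < y ^ 2 := pow_pos hy.1 2
      rw [Real.norm_eq_abs, abs_of_nonneg (by positivity)]
      rw [mul_inv_le_iff₀ (by linarith), one_mul]
      linarith
  have hJle : (∫ y in Ioo (0:ℝ) 1, y ^ 2 * (y ^ 2 + c)⁻¹) ≤ 1 := by
    calc (∫ y in Ioo (0:ℝ) 1, y ^ 2 * (y ^ 2 + c)⁻¹) ≤ ∫ _y in Ioo (0:ℝ) 1, (1:ℝ) := by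
          apply setIntegral_mono_on hJint (integrableOn_const (by simp)) measurableSet_Ioo
          intro y hy
          have hy2 : 0 < y ^ 2 := pow_pos hy.1 2
          rw [mul_inv_le_iff₀ (by linarith), one_mul]; linarith
      _ = 1 := by simp
  rw [measureReal_def, vol3', nsmul_eq_mul, smul_eq_mul]
  push_cast
  nlinarith [Real.pi_pos]

/-- For `Ω = B₁(0) ⊂ ℝ³`, `a(x) = 1 - ‖x‖²` and `0 < ρ < 1/(4π)`, there is no
positive `L¹` eigenfunction: no `λ ∈ ℝ` and `u ∈ L¹(Ω)`, `u > 0` a.e. with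
`∫_Ω u > 0`, satisfy `ρ∫_Ω u + (a(x) + λ)u(x) = 0` a.e. on `Ω`. -/
theorem stmt14 (ρ : ℝ) (hρ0 : 0 < ρ) (hρ : ρ < 1 / (4 * Real.pi)) :
    ¬ ∃ (l : ℝ) (u : EuclideanSpace ℝ (Fin 3) → ℝ),
        IntegrableOn u (ball (0 : EuclideanSpace ℝ (Fin 3)) 1) ∧
        (∀ᵐ x ∂(volume.restrict (ball (0 : EuclideanSpace ℝ (Fin 3)) 1)), 0 < u x) ∧
        0 < (∫ x in ball (0 : EuclideanSpace ℝ (Fin 3)) 1, u x) ∧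
        (∀ᵐ x ∂(volume.restrict (ball (0 : EuclideanSpace ℝ (Fin 3)) 1)),
          ρ * (∫ y in ball (0 : EuclideanSpace ℝ (Fin 3)) 1, u y) +
            ((1 - ‖x‖ ^ 2) + l) * u x = 0) := by
  rintro ⟨l, u, hint, hpos, hM, heq⟩
  set M := ∫ x in ball (0 : EuclideanSpace ℝ (Fin 3)) 1, u x with hMdef
  have hρM : 0 < ρ * M := mul_pos hρ0 hM
  -- a.e. facts: the coefficient is negative and u is determined
  have hneg : ∀ᵐ x ∂(volume.restrict (ball (0 : EuclideanSpace ℝ (Fin 3)) 1)),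
      (1 - ‖x‖ ^ 2) + l < 0 ∧ u x = ρ * M * (‖x‖ ^ 2 - 1 - l)⁻¹ := by
    filter_upwards [hpos, heq] with x hx hex
    have h1 : ((1 - ‖x‖ ^ 2) + l) * u x = -(ρ * M) := by linarith
    have h2 : (1 - ‖x‖ ^ 2) + l < 0 := by
      by_contra h
      push_neg at h
      nlinarith [mul_nonneg h hx.le]
    have hd : 0 < ‖x‖ ^ 2 - 1 - l := by linarith
    refine ⟨h2, ?_⟩
    rw [eq_comm, mul_inv_eq_iff_eq_mul₀ hd.ne']
    linear_combination h1
  -- l ≤ -1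
  have hl : l ≤ -1 := by
    by_contra h
    push_neg at h
    set r := min 1 (Real.sqrt (1 + l)) with hr
    have hl1 : 0 < 1 + l := by linarith
    have hr0 : 0 < r := lt_min one_pos (Real.sqrt_pos.mpr hl1)
    have hneg' : ∀ᵐ x ∂(volume : Measure (EuclideanSpace ℝ (Fin 3))),
        x ∈ ball (0 : EuclideanSpace ℝ (Fin 3)) 1 → (1 - ‖x‖ ^ 2) + l < 0 :=
      (ae_restrict_iff' measurableSet_ball).mp (hneg.mono fun x hx => hx.1)
    rw [ae_iff] at hneg'
    have hsub : ball (0 : EuclideanSpace ℝ (Fin 3)) r ⊆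
        {x : EuclideanSpace ℝ (Fin 3) |
          ¬(x ∈ ball (0 : EuclideanSpace ℝ (Fin 3)) 1 → (1 - ‖x‖ ^ 2) + l < 0)} := by
      intro x hx
      have hxr : ‖x‖ < r := mem_ball_zero_iff.mp hx
      have hx1 : x ∈ ball (0 : EuclideanSpace ℝ (Fin 3)) 1 :=
        mem_ball_zero_iff.mpr (lt_of_lt_of_le hxr (min_le_left _ _))
      have hxs : ‖x‖ ^ 2 < 1 + l := by
        have h1 : ‖x‖ ^ 2 < r ^ 2 := by
          have := norm_nonneg x
          nlinarith
        have h2 : r ^ 2 ≤ 1 + l := by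
          have := min_le_right 1 (Real.sqrt (1 + l))
          nlinarith [Real.sq_sqrt hl1.le, Real.sqrt_nonneg (1 + l), hr0]
        linarith
      simp only [mem_setOf_eq]
      intro hcontra
      have := hcontra hx1
      linarith
    have h0 : volume (ball (0 : EuclideanSpace ℝ (Fin 3)) r) = 0 :=
      measure_mono_null hsub hneg'
    exact (measure_ball_pos volume (0 : EuclideanSpace ℝ (Fin 3)) hr0).ne' h0
  set c := -1 - l with hc
  have hc0 : 0 ≤ c := by simp [hc]; linarith
  have hMeq : M = ρ * M * ∫ x in ball (0 : EuclideanSpace ℝ (Fin 3)) 1, (‖x‖ ^ 2 + c)⁻¹ := by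
    rw [← integral_const_mul]
    rw [hMdef]
    refine integral_congr_ae (hneg.mono fun x hx => ?_)
    rw [hx.2]
    ring_nf
    rw [hc, ← hMdef]; ring
  set I := ∫ x in ball (0 : EuclideanSpace ℝ (Fin 3)) 1, (‖x‖ ^ 2 + c)⁻¹ with hI
  have h1 : 1 = ρ * I := by
    have : M * 1 = M * (ρ * I) := by linarith [hMeq]; 
    exact mul_left_cancel₀ hM.ne' this
  have hIle : I ≤ 4 * Real.pi := polarbound' c hc0
  have h4 : ρ * (4 * Real.pi) < 1 := by
    rw [lt_div_iff₀ (by positivity)] at hρ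
    linarith
  nlinarith
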